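/- Let X and Y be positive bounded operators on a complex Hilbert space H and q ∈ ℂ with 0 < |q| ≤ 1. Then (|q|/2)·‖X+Y‖ ≤ w_q([[0, X],[Y, 0]]) ≤ (|q|/2)·‖X+Y‖ + √(1−|q|²)·max{‖X‖, ‖Y‖}. -/

import Mathlib

noncomputable def qNumRadius {H : Type*} [NormedAddCommGroup H] [InnerProductSpace ℂ H]
    (q : ℂ) (T : H →L[ℂ] H) : ℝ :=
  sSup {r : ℝ | ∃ x y : H, ‖x‖ = 1 ∧ ‖y‖ = 1 ∧ (inner ℂ y x : ℂ) = q ∧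
    r = ‖(inner ℂ y (T x) : ℂ)‖}

/-- The `2 × 2` block operator matrix `[[Z, X],[Y, W]]` acting on `H ⊕ H`
(the `ℓ²` direct sum `WithLp 2 (H × H)`). -/
noncomputable def block2 {H : Type*} [NormedAddCommGroup H] [InnerProductSpace ℂ H]
    (Z X Y W : H →L[ℂ] H) : WithLp 2 (H × H) →L[ℂ] WithLp 2 (H × H) :=
  (((WithLp.prodContinuousLinearEquiv 2 ℂ H H).symm : (H × H) →L[ℂ] WithLp 2 (H × H)).comp
    ((Z.comp (ContinuousLinearMap.fst ℂ H H) + X.comp (ContinuousLinearMap.snd ℂ H H)).prod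
      (Y.comp (ContinuousLinearMap.fst ℂ H H) + W.comp (ContinuousLinearMap.snd ℂ H H)))).comp
    ((WithLp.prodContinuousLinearEquiv 2 ℂ H H : WithLp 2 (H × H) →L[ℂ] (H × H)))

set_option synthInstance.maxHeartbeats 1000000
set_option maxHeartbeats 2000000
set_option linter.unusedSectionVars false
open scoped InnerProductSpace ComplexConjugate
open Complex

theorem WithLp.equiv_symm_fst {p : ENNReal} {α β : Type*} (x : α × β) :
    ((WithLp.equiv p (α × β)).symm x).fst = x.fst := rfl

theorem WithLp.equiv_symm_snd {p : ENNReal} {α β : Type*} (x : α × β) :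
    ((WithLp.equiv p (α × β)).symm x).snd = x.snd := rfl

theorem WithLp.equiv_symm_ofLp_fst {p : ENNReal} {α β : Type*} (x : α × β) :
    (WithLp.ofLp ((WithLp.equiv p (α × β)).symm x)).1 = x.1 := rfl

theorem WithLp.equiv_symm_ofLp_snd {p : ENNReal} {α β : Type*} (x : α × β) :
    (WithLp.ofLp ((WithLp.equiv p (α × β)).symm x)).2 = x.2 := rfl

section Aux
variable {H : Type*} [NormedAddCommGroup H] [InnerProductSpace ℂ H]

lemma block2_apply (X Y : H →L[ℂ] H) (x : WithLp 2 (H × H)) :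
    block2 0 X Y 0 x = (WithLp.equiv 2 (H × H)).symm (X x.snd, Y x.fst) := by
  simp [block2, WithLp.prodContinuousLinearEquiv]
  rfl

lemma block2_inner (X Y : H →L[ℂ] H) (x y : WithLp 2 (H × H)) :
    ⟪y, block2 0 X Y 0 x⟫_ℂ = ⟪y.fst, X x.snd⟫_ℂ + ⟪y.snd, Y x.fst⟫_ℂ := by
  rw [block2_apply, WithLp.prod_inner_apply, WithLp.ofLp_fst, WithLp.ofLp_snd, WithLp.equiv_symm_ofLp_fst, WithLp.equiv_symm_ofLp_snd]

lemma sqrtCS {a b c d : ℝ} (ha : 0 ≤ a) (hb : 0 ≤ b) (hc : 0 ≤ c) (hd : 0 ≤ d) :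
    Real.sqrt a * Real.sqrt b + Real.sqrt c * Real.sqrt d ≤
      Real.sqrt (a + c) * Real.sqrt (b + d) := by
  have h1 := Real.sq_sqrt ha
  have h2 := Real.sq_sqrt hb
  have h3 := Real.sq_sqrt hc
  have h4 := Real.sq_sqrt hd
  have hL : 0 ≤ Real.sqrt a * Real.sqrt b + Real.sqrt c * Real.sqrt d := by positivity
  have key : (Real.sqrt a * Real.sqrt b + Real.sqrt c * Real.sqrt d) ^ 2 ≤ (a + c) * (b + d) := by
    nlinarith [sq_nonneg (Real.sqrt a * Real.sqrt d - Real.sqrt c * Real.sqrt b),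
      Real.sqrt_nonneg a, Real.sqrt_nonneg b, Real.sqrt_nonneg c, Real.sqrt_nonneg d]
  calc Real.sqrt a * Real.sqrt b + Real.sqrt c * Real.sqrt d
      = Real.sqrt ((Real.sqrt a * Real.sqrt b + Real.sqrt c * Real.sqrt d) ^ 2) :=
        (Real.sqrt_sq hL).symm
    _ ≤ Real.sqrt ((a + c) * (b + d)) := Real.sqrt_le_sqrt key
    _ = Real.sqrt (a + c) * Real.sqrt (b + d) := Real.sqrt_mul (add_nonneg ha hc) _

end Aux

section Aux2
variable {H : Type*} [NormedAddCommGroup H] [InnerProductSpace ℂ H] [CompleteSpace H]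

lemma aux_opCS {S : H →L[ℂ] H} (hS : S.IsPositive) (x y : H) :
    ‖⟪S x, y⟫_ℂ‖ ≤
      Real.sqrt (Complex.re ⟪S x, x⟫_ℂ) * Real.sqrt (Complex.re ⟪S y, y⟫_ℂ) := by
  have hS' : 0 ≤ S := (ContinuousLinearMap.nonneg_iff_isPositive S).mpr hS
  set R := CFC.sqrt S with hRdef
  have hRR : R * R = S := CFC.sqrt_mul_sqrt_self S hS'
  have hRsa : IsSelfAdjoint R := IsSelfAdjoint.of_nonneg (CFC.sqrt_nonneg (a := S))
  have hmove : ∀ a b : H, ⟪R a, b⟫_ℂ = ⟪a, R b⟫_ℂ := fun a b => by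
    rw [← ContinuousLinearMap.adjoint_inner_left, hRsa.adjoint_eq]
  have key : ∀ a b : H, ⟪S a, b⟫_ℂ = ⟪R a, R b⟫_ℂ := fun a b => by
    rw [← hRR, ContinuousLinearMap.mul_apply, hmove]
  have h1 : ∀ a : H, Real.sqrt (Complex.re ⟪S a, a⟫_ℂ) = ‖R a‖ := fun a => by
    rw [key, inner_self_eq_norm_sq_to_K (𝕜 := ℂ)]
    norm_cast
    exact Real.sqrt_sq (norm_nonneg _)
  rw [h1, h1, key]
  exact norm_inner_le_norm _ _

lemma aux_normle {S : H →L[ℂ] H} (hS : S.IsPositive) {c : ℝ} (hc : 0 ≤ c)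
    (h : ∀ u : H, Complex.re ⟪S u, u⟫_ℂ ≤ c * ‖u‖ ^ 2) : ‖S‖ ≤ c := by
  refine S.opNorm_le_bound hc fun x => ?_
  rcases eq_or_lt_of_le (norm_nonneg (S x)) with h0 | h0
  · rw [← h0]; positivity
  have h2 : ‖S x‖ ^ 2 = ‖⟪S x, S x⟫_ℂ‖ := by
    rw [inner_self_eq_norm_sq_to_K (𝕜 := ℂ)]
    norm_cast
    simp [sq_abs, _root_.abs_of_nonneg (norm_nonneg _), sq]
  have h3 := aux_opCS hS x (S x)
  have h4 : Real.sqrt (Complex.re ⟪S x, x⟫_ℂ) ≤ Real.sqrt c * ‖x‖ := by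
    calc Real.sqrt (Complex.re ⟪S x, x⟫_ℂ) ≤ Real.sqrt (c * ‖x‖ ^ 2) :=
          Real.sqrt_le_sqrt (h x)
      _ = Real.sqrt c * ‖x‖ := by rw [Real.sqrt_mul hc, Real.sqrt_sq (norm_nonneg _)]
  have h5 : Real.sqrt (Complex.re ⟪S (S x), S x⟫_ℂ) ≤ Real.sqrt c * ‖S x‖ := by
    calc Real.sqrt (Complex.re ⟪S (S x), S x⟫_ℂ) ≤ Real.sqrt (c * ‖S x‖ ^ 2) :=
          Real.sqrt_le_sqrt (h (S x))
      _ = Real.sqrt c * ‖S x‖ := by rw [Real.sqrt_mul hc, Real.sqrt_sq (norm_nonneg _)]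
  have hsq : Real.sqrt c * Real.sqrt c = c := Real.mul_self_sqrt hc
  have h6 : ‖S x‖ ^ 2 ≤ c * ‖x‖ * ‖S x‖ := by
    calc ‖S x‖ ^ 2 = ‖⟪S x, S x⟫_ℂ‖ := h2
      _ ≤ Real.sqrt (Complex.re ⟪S x, x⟫_ℂ) * Real.sqrt (Complex.re ⟪S (S x), S x⟫_ℂ) := h3
      _ ≤ (Real.sqrt c * ‖x‖) * (Real.sqrt c * ‖S x‖) :=
          mul_le_mul h4 h5 (Real.sqrt_nonneg _) (by positivity)
      _ = c * ‖x‖ * ‖S x‖ := by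
          rw [show (Real.sqrt c * ‖x‖) * (Real.sqrt c * ‖S x‖)
            = (Real.sqrt c * Real.sqrt c) * (‖x‖ * ‖S x‖) by ring, hsq]; ring
  nlinarith

lemma aux_exists_unit {S : H →L[ℂ] H} (hS : S.IsPositive) {v : H} (hv : v ≠ 0)
    {ε : ℝ} (hε : 0 < ε) : ∃ u : H, ‖u‖ = 1 ∧ ‖S‖ - ε ≤ Complex.re ⟪S u, u⟫_ℂ := by
  by_contra hcon
  push_neg at hcon
  have hu0 : ∃ u : H, ‖u‖ = 1 := by
    refine ⟨(↑‖v‖)⁻¹ • v, ?_⟩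
    rw [norm_smul]
    simp [norm_ne_zero_iff.mpr hv]
  obtain ⟨u0, hu0⟩ := hu0
  have hpos0 : (0:ℝ) ≤ Complex.re ⟪S u0, u0⟫_ℂ := hS.re_inner_nonneg_left u0
  have hcge : 0 ≤ ‖S‖ - ε := le_of_lt (lt_of_le_of_lt hpos0 (hcon u0 hu0))
  have hall : ∀ x : H, Complex.re ⟪S x, x⟫_ℂ ≤ (‖S‖ - ε) * ‖x‖ ^ 2 := by
    intro x
    rcases eq_or_ne x 0 with rfl | hx
    · simp
    · have hxn : (0:ℝ) < ‖x‖ := norm_pos_iff.mpr hx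
      set a : ℂ := ((↑‖x‖)⁻¹ : ℂ) with ha
      have hu : ‖a • x‖ = 1 := by
        rw [norm_smul, ha]; simp [hxn.ne']
      have h1 := le_of_lt (hcon (a • x) hu)
      have hscale : Complex.re ⟪S (a • x), a • x⟫_ℂ
          = (‖x‖ ^ 2)⁻¹ * Complex.re ⟪S x, x⟫_ℂ := by
        rw [map_smul, inner_smul_left, inner_smul_right, ha,
          ← Complex.ofReal_inv, Complex.conj_ofReal,
          show ((↑(‖x‖⁻¹) : ℂ)) * ((↑(‖x‖⁻¹) : ℂ) * ⟪S x, x⟫_ℂ)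
            = ((↑(‖x‖⁻¹ * ‖x‖⁻¹) : ℂ)) * ⟪S x, x⟫_ℂ by push_cast; ring]
        rw [Complex.re_ofReal_mul]
        congr 1
        rw [sq, mul_inv]
      rw [hscale] at h1
      have h2 := mul_le_mul_of_nonneg_left h1 (le_of_lt (pow_pos hxn 2))
      calc Complex.re ⟪S x, x⟫_ℂ
          = ‖x‖ ^ 2 * ((‖x‖ ^ 2)⁻¹ * Complex.re ⟪S x, x⟫_ℂ) := by field_simp
        _ ≤ ‖x‖ ^ 2 * (‖S‖ - ε) := h2
        _ = (‖S‖ - ε) * ‖x‖ ^ 2 := by ring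
  have := aux_normle hS hcge hall
  linarith

lemma quad_bound {S : H →L[ℂ] H} (v : H) :
    Complex.re ⟪S v, v⟫_ℂ ≤ ‖S‖ * ‖v‖ ^ 2 := by
  calc Complex.re ⟪S v, v⟫_ℂ ≤ ‖⟪S v, v⟫_ℂ‖ := Complex.re_le_norm _
    _ = ‖⟪S v, v⟫_ℂ‖ := rfl
    _ ≤ ‖S v‖ * ‖v‖ := norm_inner_le_norm _ _
    _ ≤ (‖S‖ * ‖v‖) * ‖v‖ := by
        exact mul_le_mul_of_nonneg_right (S.le_opNorm v) (norm_nonneg v)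
    _ = ‖S‖ * ‖v‖ ^ 2 := by ring

/-- The key bound `|⟪x, T x⟫| ≤ ‖X + Y‖ / 2` for unit `x`. -/
lemma diag_bound {X Y : H →L[ℂ] H} (hX : X.IsPositive) (hY : Y.IsPositive)
    (x : WithLp 2 (H × H)) (hx : ‖x‖ = 1) :
    ‖⟪x, block2 0 X Y 0 x⟫_ℂ‖ ≤ ‖X + Y‖ / 2 := by
  rw [block2_inner]
  set x1 := x.fst
  set x2 := x.snd
  have hXre : ∀ v : H, 0 ≤ Complex.re ⟪X v, v⟫_ℂ := hX.re_inner_nonneg_left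
  have hYre : ∀ v : H, 0 ≤ Complex.re ⟪Y v, v⟫_ℂ := hY.re_inner_nonneg_left
  have h1 : ‖⟪x1, X x2⟫_ℂ‖ ≤
      Real.sqrt (Complex.re ⟪X x2, x2⟫_ℂ) * Real.sqrt (Complex.re ⟪X x1, x1⟫_ℂ) := by
    rw [← inner_conj_symm, Complex.norm_conj]
    exact aux_opCS hX x2 x1
  have h2 : ‖⟪x2, Y x1⟫_ℂ‖ ≤
      Real.sqrt (Complex.re ⟪Y x2, x2⟫_ℂ) * Real.sqrt (Complex.re ⟪Y x1, x1⟫_ℂ) := by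
    rw [← inner_conj_symm, Complex.norm_conj, mul_comm]
    exact aux_opCS hY x1 x2
  have h3 := sqrtCS (hXre x2) (hXre x1) (hYre x2) (hYre x1)
  have hsum : ∀ v : H, Complex.re ⟪X v, v⟫_ℂ + Complex.re ⟪Y v, v⟫_ℂ
      = Complex.re ⟪(X + Y) v, v⟫_ℂ := fun v => by
    rw [ContinuousLinearMap.add_apply, inner_add_left, Complex.add_re]
  have h4 : ∀ v : H, Real.sqrt (Complex.re ⟪(X + Y) v, v⟫_ℂ)
      ≤ Real.sqrt ‖X + Y‖ * ‖v‖ := fun v => by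
    calc Real.sqrt (Complex.re ⟪(X + Y) v, v⟫_ℂ)
        ≤ Real.sqrt (‖X + Y‖ * ‖v‖ ^ 2) := Real.sqrt_le_sqrt (quad_bound v)
      _ = Real.sqrt ‖X + Y‖ * ‖v‖ := by
          rw [Real.sqrt_mul (norm_nonneg _), Real.sqrt_sq (norm_nonneg _)]
  have hn : ‖x1‖ ^ 2 + ‖x2‖ ^ 2 = 1 := by
    have := WithLp.prod_norm_sq_eq_of_L2 x
    rw [hx] at this; simpa using this.symm
  have hsq : Real.sqrt ‖X + Y‖ * Real.sqrt ‖X + Y‖ = ‖X + Y‖ :=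
    Real.mul_self_sqrt (norm_nonneg _)
  calc ‖(⟪x1, X x2⟫_ℂ + ⟪x2, Y x1⟫_ℂ)‖
      ≤ ‖⟪x1, X x2⟫_ℂ‖ + ‖⟪x2, Y x1⟫_ℂ‖ := norm_add_le _ _
    _ ≤ Real.sqrt (Complex.re ⟪X x2, x2⟫_ℂ) * Real.sqrt (Complex.re ⟪X x1, x1⟫_ℂ)
        + Real.sqrt (Complex.re ⟪Y x2, x2⟫_ℂ) * Real.sqrt (Complex.re ⟪Y x1, x1⟫_ℂ) :=
        add_le_add h1 h2
    _ ≤ Real.sqrt (Complex.re ⟪X x2, x2⟫_ℂ + Complex.re ⟪Y x2, x2⟫_ℂ)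
        * Real.sqrt (Complex.re ⟪X x1, x1⟫_ℂ + Complex.re ⟪Y x1, x1⟫_ℂ) := h3
    _ = Real.sqrt (Complex.re ⟪(X + Y) x2, x2⟫_ℂ)
        * Real.sqrt (Complex.re ⟪(X + Y) x1, x1⟫_ℂ) := by rw [hsum, hsum]
    _ ≤ (Real.sqrt ‖X + Y‖ * ‖x2‖) * (Real.sqrt ‖X + Y‖ * ‖x1‖) :=
        mul_le_mul (h4 x2) (h4 x1) (Real.sqrt_nonneg _) (by positivity)
    _ = ‖X + Y‖ * (‖x1‖ * ‖x2‖) := by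
        rw [show (Real.sqrt ‖X + Y‖ * ‖x2‖) * (Real.sqrt ‖X + Y‖ * ‖x1‖)
          = (Real.sqrt ‖X + Y‖ * Real.sqrt ‖X + Y‖) * (‖x1‖ * ‖x2‖) by ring, hsq]
    _ ≤ ‖X + Y‖ / 2 := by
        nlinarith [sq_nonneg (‖x1‖ - ‖x2‖), norm_nonneg (X + Y), norm_nonneg x1,
          norm_nonneg x2]

lemma Tx_bound (X Y : H →L[ℂ] H) (x : WithLp 2 (H × H)) (hx : ‖x‖ = 1) :
    ‖block2 0 X Y 0 x‖ ≤ max ‖X‖ ‖Y‖ := by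
  set M := max ‖X‖ ‖Y‖ with hM
  have hM0 : 0 ≤ M := le_trans (norm_nonneg X) (le_max_left _ _)
  have hn : ‖x.fst‖ ^ 2 + ‖x.snd‖ ^ 2 = 1 := by
    have := WithLp.prod_norm_sq_eq_of_L2 x
    rw [hx] at this; simpa using this.symm
  have h1 : ‖block2 0 X Y 0 x‖ ^ 2 = ‖X x.snd‖ ^ 2 + ‖Y x.fst‖ ^ 2 := by
    rw [block2_apply, WithLp.prod_norm_sq_eq_of_L2, WithLp.equiv_symm_fst,
      WithLp.equiv_symm_snd]
  have h2 : ‖X x.snd‖ ≤ M * ‖x.snd‖ :=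
    le_trans (X.le_opNorm _) (mul_le_mul_of_nonneg_right (le_max_left _ _) (norm_nonneg _))
  have h3 : ‖Y x.fst‖ ≤ M * ‖x.fst‖ :=
    le_trans (Y.le_opNorm _) (mul_le_mul_of_nonneg_right (le_max_right _ _) (norm_nonneg _))
  have h4 : ‖block2 0 X Y 0 x‖ ^ 2 ≤ M ^ 2 := by
    rw [h1]
    nlinarith [norm_nonneg (X x.snd), norm_nonneg (Y x.fst), norm_nonneg x.fst,
      norm_nonneg x.snd]
  nlinarith [norm_nonneg (block2 0 X Y 0 x)]

end Aux2

theorem stmt17 {H : Type*} [NormedAddCommGroup H] [InnerProductSpace ℂ H] [CompleteSpace H]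
    (X Y : H →L[ℂ] H) (hX : X.IsPositive) (hY : Y.IsPositive)
    (q : ℂ) (hq : 0 < ‖q‖) (hq1 : ‖q‖ ≤ 1) :
    ‖q‖ / 2 * ‖X + Y‖ ≤ qNumRadius q (block2 0 X Y 0) ∧
      qNumRadius q (block2 0 X Y 0) ≤
        ‖q‖ / 2 * ‖X + Y‖ + Real.sqrt (1 - ‖q‖ ^ 2) * max ‖X‖ ‖Y‖ := by
  set T := block2 0 X Y 0 with hT
  set s : Set ℝ := {r : ℝ | ∃ x y : WithLp 2 (H × H), ‖x‖ = 1 ∧ ‖y‖ = 1 ∧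
    (inner ℂ y x : ℂ) = q ∧ r = ‖(inner ℂ y (T x))‖} with hs
  have hrad : qNumRadius q T = sSup s := rfl
  set aq := ‖q‖ with haq
  have haq0 : (0:ℝ) < aq := hq
  set M := max ‖X‖ ‖Y‖ with hM
  have hM0 : 0 ≤ M := le_trans (norm_nonneg X) (le_max_left _ _)
  set c : ℝ := Real.sqrt (1 - aq ^ 2) with hcdef
  have hc0 : 0 ≤ c := Real.sqrt_nonneg _
  have haq2 : 0 ≤ 1 - aq ^ 2 := by nlinarith
  have hc2 : c ^ 2 = 1 - aq ^ 2 := Real.sq_sqrt haq2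
  set B : ℝ := aq / 2 * ‖X + Y‖ + c * M with hB
  have hB0 : 0 ≤ B := by positivity
  -- upper bound for every element of the set
  have hub : ∀ r ∈ s, r ≤ B := by
    rintro r ⟨x, y, hx, hy, hyx, rfl⟩
    have hxx : ⟪x, x⟫_ℂ = 1 := by
      rw [inner_self_eq_norm_sq_to_K (𝕜 := ℂ), hx]; norm_num
    set z := y - (starRingEnd ℂ q) • x with hz
    have hzx : ⟪z, x⟫_ℂ = 0 := by
      rw [hz, inner_sub_left, inner_smul_left, Complex.conj_conj, hxx]
      rw [show (inner ℂ y x : ℂ) = q from hyx]; ring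
    have hxz : ⟪x, z⟫_ℂ = 0 := by rw [← inner_conj_symm, hzx, map_zero]
    have hyz : y = (starRingEnd ℂ q) • x + z := by rw [hz]; abel
    have hnqx : ‖(starRingEnd ℂ q) • x‖ = aq := by
      rw [norm_smul, hx, mul_one, haq]
      simp [Complex.norm_conj]
    have hnz2 : ‖z‖ ^ 2 = 1 - aq ^ 2 := by
      have h := norm_add_sq (𝕜 := ℂ) ((starRingEnd ℂ q) • x) z
      rw [← hyz, hy, hnqx, inner_smul_left, hxz, mul_zero, map_zero] at h
      simp at h
      linarith
    have hnz : ‖z‖ = c := by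
      rw [← Real.sqrt_sq (norm_nonneg z), hnz2, hcdef]
    have hsplit : (inner ℂ y (T x) : ℂ) = q * ⟪x, T x⟫_ℂ + ⟪z, T x⟫_ℂ := by
      rw [show (inner ℂ y (T x) : ℂ) = ⟪y, T x⟫_ℂ from rfl, hyz, inner_add_left,
        inner_smul_left, Complex.conj_conj]
    calc ‖(inner ℂ y (T x) : ℂ)‖
        ≤ aq * ‖⟪x, T x⟫_ℂ‖ + ‖⟪z, T x⟫_ℂ‖ := by
          rw [hsplit]
          refine le_trans (norm_add_le _ _) ?_
          rw [norm_mul]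
      _ ≤ aq * (‖X + Y‖ / 2) + ‖z‖ * ‖T x‖ := by
          refine add_le_add (mul_le_mul_of_nonneg_left (diag_bound hX hY x hx) haq0.le) ?_
          exact norm_inner_le_norm _ _
      _ ≤ aq * (‖X + Y‖ / 2) + c * M := by
          rw [hnz]
          exact add_le_add (le_refl _) (mul_le_mul_of_nonneg_left (Tx_bound X Y x hx) hc0)
      _ = B := by rw [hB]; ring
  have hbdd : BddAbove s := ⟨B, hub⟩
  have hupper : sSup s ≤ B := Real.sSup_le hub hB0
  constructor
  · -- lower bound
    rcases subsingleton_or_nontrivial H with hsub | hnt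
    · have hXY : X + Y = 0 := by
        ext v; simp [Subsingleton.elim v 0]
      rw [hrad, hXY, norm_zero, mul_zero]
      exact Real.sSup_nonneg (by rintro r ⟨_, _, _, _, _, rfl⟩; positivity)
    · rw [hrad]
      refine le_of_forall_pos_le_add fun ε hε => ?_
      obtain ⟨v, hv⟩ := exists_ne (0 : H)
      have hS : (X + Y).IsPositive := hX.add hY
      have hε' : (0:ℝ) < 2 * ε / aq := by positivity
      obtain ⟨u, hu1, hua⟩ := aux_exists_unit hS hv hε'
      -- realness of the diagonal inner products
      have hXreal : ⟪u, X u⟫_ℂ = ((Complex.re ⟪X u, u⟫_ℂ : ℝ) : ℂ) := by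
        have h1 : ⟪u, X u⟫_ℂ = ⟪X u, u⟫_ℂ := by
          rw [← ContinuousLinearMap.adjoint_inner_left, hX.isSelfAdjoint.adjoint_eq]
        have h2 : (starRingEnd ℂ) ⟪X u, u⟫_ℂ = ⟪X u, u⟫_ℂ := by
          rw [inner_conj_symm, h1]
        rw [h1]; exact (Complex.conj_eq_iff_re.mp h2).symm
      have hYreal : ⟪u, Y u⟫_ℂ = ((Complex.re ⟪Y u, u⟫_ℂ : ℝ) : ℂ) := by
        have h1 : ⟪u, Y u⟫_ℂ = ⟪Y u, u⟫_ℂ := by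
          rw [← ContinuousLinearMap.adjoint_inner_left, hY.isSelfAdjoint.adjoint_eq]
        have h2 : (starRingEnd ℂ) ⟪Y u, u⟫_ℂ = ⟪Y u, u⟫_ℂ := by
          rw [inner_conj_symm, h1]
        rw [h1]; exact (Complex.conj_eq_iff_re.mp h2).symm
      set ax := Complex.re ⟪X u, u⟫_ℂ with hax
      set ay := Complex.re ⟪Y u, u⟫_ℂ with hay
      have hax0 : 0 ≤ ax := hX.re_inner_nonneg_left u
      have hay0 : 0 ≤ ay := hY.re_inner_nonneg_left u
      have ha : Complex.re ⟪(X + Y) u, u⟫_ℂ = ax + ay := by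
        rw [ContinuousLinearMap.add_apply, inner_add_left, Complex.add_re]
      set a : ℝ := ax + ay with hadef
      have ha0 : 0 ≤ a := add_nonneg hax0 hay0
      have hua' : ‖X + Y‖ - 2 * ε / aq ≤ a := by rw [← ha]; exact hua
      -- the vectors
      set rc : ℂ := (((Real.sqrt 2)⁻¹ : ℝ) : ℂ) with hrc
      have hrcn : ‖rc‖ = (Real.sqrt 2)⁻¹ := by
        rw [hrc, Complex.norm_real]
        exact _root_.abs_of_nonneg (by positivity)
      have hrc2 : (starRingEnd ℂ) rc * rc = ((1/2 : ℝ) : ℂ) := by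
        have hh : ((Real.sqrt 2)⁻¹ * (Real.sqrt 2)⁻¹ : ℝ) = 1/2 := by
          rw [← mul_inv, Real.mul_self_sqrt (by norm_num : (0:ℝ) ≤ 2)]
          norm_num
        rw [hrc, Complex.conj_ofReal, ← Complex.ofReal_mul, hh]
      set x : WithLp 2 (H × H) := (WithLp.equiv 2 (H × H)).symm (rc • u, rc • u) with hxdef
      set z0 : WithLp 2 (H × H) := (WithLp.equiv 2 (H × H)).symm (rc • u, -(rc • u))
        with hz0def
      have hrcu : ‖rc • u‖ ^ 2 = 1/2 := by
        rw [norm_smul, hu1, mul_one, hrcn]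
        rw [show ((Real.sqrt 2)⁻¹) ^ 2 = ((Real.sqrt 2) ^ 2)⁻¹ by ring,
          Real.sq_sqrt (le_of_lt two_pos)]
        norm_num
      have hx1 : ‖x‖ = 1 := by
        have h := WithLp.prod_norm_sq_eq_of_L2 x
        rw [hxdef, WithLp.equiv_symm_fst, WithLp.equiv_symm_snd] at h
        rw [hrcu] at h
        rw [← hxdef] at h
        rw [← Real.sqrt_sq (norm_nonneg x), h]
        norm_num
      have hz01 : ‖z0‖ = 1 := by
        have h := WithLp.prod_norm_sq_eq_of_L2 z0
        rw [hz0def, WithLp.equiv_symm_fst, WithLp.equiv_symm_snd, norm_neg] at h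
        rw [hrcu] at h
        rw [← hz0def] at h
        rw [← Real.sqrt_sq (norm_nonneg z0), h]
        norm_num
      have hz0x : ⟪z0, x⟫_ℂ = 0 := by
        rw [WithLp.prod_inner_apply, WithLp.ofLp_fst, WithLp.ofLp_snd, hxdef, hz0def, WithLp.equiv_symm_fst,
          WithLp.equiv_symm_snd, WithLp.equiv_symm_ofLp_fst, WithLp.equiv_symm_ofLp_snd,
          inner_neg_left]
        ring
      have hxz0 : ⟪x, z0⟫_ℂ = 0 := by rw [← inner_conj_symm, hz0x, map_zero]
      have hxx : ⟪x, x⟫_ℂ = 1 := by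
        rw [inner_self_eq_norm_sq_to_K (𝕜 := ℂ), hx1]; norm_num
      -- inner products with T x
      have hA : ⟪x, T x⟫_ℂ = ((a/2 : ℝ) : ℂ) := by
        rw [hT, block2_inner, hxdef, WithLp.equiv_symm_fst, WithLp.equiv_symm_snd,
          map_smul, inner_smul_left, inner_smul_right, map_smul, inner_smul_left,
          inner_smul_right, hXreal, hYreal]
        rw [show (starRingEnd ℂ) rc * (rc * ((ax:ℝ):ℂ)) + (starRingEnd ℂ) rc * (rc * ((ay:ℝ):ℂ))
          = ((starRingEnd ℂ) rc * rc) * (((ax:ℝ):ℂ) + ((ay:ℝ):ℂ)) by ring, hrc2]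
        rw [hadef]
        push_cast
        ring
      set b : ℝ := (ax - ay)/2 with hbdef
      have hBz : ⟪z0, T x⟫_ℂ = ((b : ℝ) : ℂ) := by
        rw [hT, block2_inner, hxdef, hz0def, WithLp.equiv_symm_fst, WithLp.equiv_symm_snd,
          WithLp.equiv_symm_fst, WithLp.equiv_symm_snd, inner_neg_left,
          map_smul, inner_smul_left, inner_smul_right, map_smul, inner_smul_left,
          inner_smul_right, hXreal, hYreal]
        rw [show (starRingEnd ℂ) rc * (rc * ((ax:ℝ):ℂ)) + -((starRingEnd ℂ) rc * (rc * ((ay:ℝ):ℂ)))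
          = ((starRingEnd ℂ) rc * rc) * (((ax:ℝ):ℂ) - ((ay:ℝ):ℂ)) by ring, hrc2]
        rw [hbdef]
        push_cast
        ring
      -- the test vector y
      set sb : ℝ := if b < 0 then (-1:ℝ) else 1 with hsbdef
      have hsbb : sb * b = |b| := by
        rcases lt_or_ge b 0 with h | h
        · rw [hsbdef, if_pos h, abs_of_neg h]; ring
        · rw [hsbdef, if_neg (not_lt.mpr h), _root_.abs_of_nonneg h]; ring
      have hsbabs : |sb| = 1 := by
        rcases lt_or_ge b 0 with h | h
        · rw [hsbdef, if_pos h]; norm_num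
        · rw [hsbdef, if_neg (not_lt.mpr h)]; norm_num
      set φ : ℂ := ((starRingEnd ℂ q) / ((aq:ℝ):ℂ)) * ((sb:ℝ):ℂ) with hφdef
      have habsφ : ‖φ‖ = 1 := by
        rw [hφdef, norm_mul, norm_div, Complex.norm_conj, Complex.norm_real, Real.norm_eq_abs,
          Complex.norm_real, Real.norm_eq_abs, _root_.abs_of_nonneg haq0.le, ← haq, div_self (ne_of_gt haq0), hsbabs]
        norm_num
      have hconjφ : (starRingEnd ℂ) φ = (q / ((aq:ℝ):ℂ)) * ((sb:ℝ):ℂ) := by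
        rw [hφdef, map_mul, map_div₀, Complex.conj_conj, Complex.conj_ofReal,
          Complex.conj_ofReal]
      set y : WithLp 2 (H × H) := (starRingEnd ℂ q) • x + (((c:ℝ):ℂ) * φ) • z0 with hydef
      have hyx : (inner ℂ y x : ℂ) = q := by
        rw [show (inner ℂ y x : ℂ) = ⟪y, x⟫_ℂ from rfl, hydef, inner_add_left,
          inner_smul_left, inner_smul_left, Complex.conj_conj, hxx, hz0x]
        ring
      have hy1 : ‖y‖ = 1 := by
        have h := norm_add_sq (𝕜 := ℂ) ((starRingEnd ℂ q) • x) ((((c:ℝ):ℂ) * φ) • z0)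
        rw [← hydef] at h
        rw [inner_smul_left, inner_smul_right, hxz0, mul_zero, mul_zero,
          map_zero] at h
        rw [norm_smul, norm_smul, hx1, hz01, mul_one, mul_one] at h
        have h2 : ‖(starRingEnd ℂ) q‖ = aq := by simp [haq, Complex.norm_conj]
        have h3 : ‖((c:ℝ):ℂ) * φ‖ = c := by
          rw [norm_mul, Complex.norm_real, Real.norm_eq_abs, _root_.abs_of_nonneg hc0,
            habsφ, mul_one]
        rw [h2, h3] at h
        have h4 : ‖y‖ ^ 2 = 1 := by rw [h, hc2]; ring
        rw [← Real.sqrt_sq (norm_nonneg y), h4, Real.sqrt_one]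
      have haqc : ((aq:ℝ):ℂ) ≠ 0 := by
        simpa using ne_of_gt haq0
      have hV : (inner ℂ y (T x) : ℂ) = (q / ((aq:ℝ):ℂ)) * ((aq * (a/2) + c * |b| : ℝ) : ℂ) := by
        rw [show (inner ℂ y (T x) : ℂ) = ⟪y, T x⟫_ℂ from rfl, hydef, inner_add_left,
          inner_smul_left, inner_smul_left, Complex.conj_conj, hA, hBz,
          map_mul, Complex.conj_ofReal, hconjφ, ← hsbb]
        push_cast
        field_simp
      have habsV : ‖(inner ℂ y (T x) : ℂ)‖ = aq * (a/2) + c * |b| := by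
        rw [hV, norm_mul, norm_div, Complex.norm_real, Real.norm_eq_abs, Complex.norm_real, Real.norm_eq_abs,
          _root_.abs_of_nonneg haq0.le, ← haq, div_self (ne_of_gt haq0), one_mul]
        exact _root_.abs_of_nonneg (by positivity)
      have hmem : ‖(inner ℂ y (T x) : ℂ)‖ ∈ s := ⟨x, y, hx1, hy1, hyx, rfl⟩
      have hle := le_csSup hbdd hmem
      have hval : aq / 2 * ‖X + Y‖ - ε ≤ ‖(inner ℂ y (T x) : ℂ)‖ := by
        rw [habsV]
        have h1 : aq * ((‖X + Y‖ - 2 * ε / aq)/2) ≤ aq * (a/2) :=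
          mul_le_mul_of_nonneg_left (by linarith) haq0.le
        have h2 : aq * ((‖X + Y‖ - 2 * ε / aq)/2) = aq / 2 * ‖X + Y‖ - ε := by
          field_simp
        nlinarith [abs_nonneg b]
      linarith
  · rw [hrad]
    exact le_trans hupper (le_of_eq rfl)
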